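/- Let p and q be positive real numbers such that p/q is irrational. Then there exists no strictly isomorphic rectangle partition pair for (p,q) of any finite size k. (Equivalently: the strict rectangle transformation problem SRTP(p,q) has no solution of finite size.) -/

import Mathlib

open scoped Classical

/-- An axis-parallel rectangle in the plane, given by its coordinates. -/
structure Rect where
  x1 : ℝ
  x2 : ℝ
  y1 : ℝ
  y2 : ℝ

namespace Rect

/-- The horizontal side length. -/
def width (r : Rect) : ℝ := r.x2 - r.x1

/-- The vertical side length. -/
def height (r : Rect) : ℝ := r.y2 - r.y1

/-- The closed rectangle as a set of points. -/
def carrier (r : Rect) : Set (ℝ × ℝ) := Set.Icc r.x1 r.x2 ×ˢ Set.Icc r.y1 r.y2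

/-- The interior of the rectangle. -/
def inner (r : Rect) : Set (ℝ × ℝ) := Set.Ioo r.x1 r.x2 ×ˢ Set.Ioo r.y1 r.y2

/-- The rectangle is nondegenerate. -/
def Nondeg (r : Rect) : Prop := r.x1 < r.x2 ∧ r.y1 < r.y2

end Rect

/-- `P` is a rectangle partition of `[0, W] × [0, H]`: finitely many nondegenerate
rectangles with pairwise disjoint interiors whose union is `[0, W] × [0, H]`. -/
def IsRectPartition {k : ℕ} (W H : ℝ) (P : Fin k → Rect) : Prop :=
  (∀ i, (P i).Nondeg) ∧
  (∀ i j : Fin k, i ≠ j → (P i).inner ∩ (P j).inner = ∅) ∧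
  (⋃ i, (P i).carrier) = Set.Icc (0 : ℝ) W ×ˢ Set.Icc (0 : ℝ) H

/-- `P1`, `P2`, `σ` form a strictly isomorphic rectangle partition pair between the
rectangles `a × b` and `c × d`: matched modules have equal width and equal height. -/
def IsStrictIsoPair (a b c d : ℝ) {k : ℕ} (P1 P2 : Fin k → Rect)
    (σ : Equiv.Perm (Fin k)) : Prop :=
  IsRectPartition a b P1 ∧ IsRectPartition c d P2 ∧
  ∀ i, (P1 i).width = (P2 (σ i)).width ∧ (P1 i).height = (P2 (σ i)).height

/-- There is a strictly isomorphic rectangle partition pair between `a × b` and `c × d`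
of size `k`. -/
def StrictPairGen (a b c d : ℝ) (k : ℕ) : Prop :=
  ∃ (P1 P2 : Fin k → Rect) (σ : Equiv.Perm (Fin k)), IsStrictIsoPair a b c d P1 P2 σ

/-- A strictly isomorphic rectangle partition pair for `(p, q)` of size `k`:
partitions of `[0,p] × [0,q]` and `[0,q] × [0,p]` with a matching preserving
widths and heights. -/
def StrictPair (p q : ℝ) (k : ℕ) : Prop := StrictPairGen p q q p k

/-- An isomorphic rectangle partition pair (rotation allowed) between `a × b` and
`c × d` of size `k`: matched modules have the same unordered pair of side lengths. -/
def IsoPairRot (a b c d : ℝ) (k : ℕ) : Prop :=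
  ∃ (P1 P2 : Fin k → Rect) (σ : Equiv.Perm (Fin k)),
    IsRectPartition a b P1 ∧ IsRectPartition c d P2 ∧
    ∀ i, ((P1 i).width = (P2 (σ i)).width ∧ (P1 i).height = (P2 (σ i)).height) ∨
         ((P1 i).width = (P2 (σ i)).height ∧ (P1 i).height = (P2 (σ i)).width)

/-- A slat rectangle partition: if horizontal sides of two modules lie on the same
horizontal line and overlap in more than one point, they are identical segments. -/
def IsSlat {k : ℕ} (P : Fin k → Rect) : Prop :=
  ∀ i j : Fin k, ∀ yi ∈ ({(P i).y1, (P i).y2} : Set ℝ),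
    ∀ yj ∈ ({(P j).y1, (P j).y2} : Set ℝ), yi = yj →
      max (P i).x1 (P j).x1 < min (P i).x2 (P j).x2 →
      (P i).x1 = (P j).x1 ∧ (P i).x2 = (P j).x2


open MeasureTheory

/-- A step function whose integral between any two points of a finite set `S`
realizes the differences of an arbitrary function `f`. -/
lemma exists_stepFn (f : ℝ → ℝ) (S : Finset ℝ) :
    ∃ u : ℝ → ℝ, Integrable u ∧
      ∀ a ∈ S, ∀ b ∈ S, a ≤ b → ∫ t in Set.Ioc a b, u t = f b - f a := by
  classical
  set G : Finset (ℝ × ℝ) :=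
    (S ×ˢ S).filter (fun r => r.1 < r.2 ∧ ∀ c ∈ S, c ≤ r.1 ∨ r.2 ≤ c) with hG
  set u : ℝ → ℝ := fun t => ∑ r ∈ G,
    ((f r.2 - f r.1) / (r.2 - r.1)) * (Set.Ioc r.1 r.2).indicator (fun _ => (1:ℝ)) t with hu
  have hGmem : ∀ r : ℝ × ℝ, r ∈ G ↔ r.1 ∈ S ∧ r.2 ∈ S ∧ r.1 < r.2 ∧
      ∀ c ∈ S, c ≤ r.1 ∨ r.2 ≤ c := by
    intro r
    simp [hG, Finset.mem_filter, Finset.mem_product, and_assoc]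
  have hdisj : ∀ r ∈ G, ∀ r' ∈ G, r ≠ r' →
      Set.Ioc r.1 r.2 ∩ Set.Ioc r'.1 r'.2 = ∅ := by
    intro r hr r' hr' hne
    rw [(hGmem r)] at hr; rw [(hGmem r')] at hr'
    by_contra h
    obtain ⟨t, ht, ht'⟩ := Set.nonempty_iff_ne_empty.2 h
    have h1 : r'.1 ≤ r.1 := by
      rcases hr.2.2.2 r'.1 hr'.1 with h' | h'
      · exact h'
      · exact absurd (ht.2.trans_lt (h'.trans_lt ht'.1)) (lt_irrefl t)
    have h1' : r.1 ≤ r'.1 := by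
      rcases hr'.2.2.2 r.1 hr.1 with h' | h'
      · exact h'
      · exact absurd (ht'.2.trans_lt (h'.trans_lt ht.1)) (lt_irrefl t)
    have he1 : r.1 = r'.1 := le_antisymm h1' h1
    have h2 : r'.2 ≤ r.2 := by
      rcases hr'.2.2.2 r.2 hr.2.1 with h' | h'
      · exact absurd (ht.2.trans (h'.trans ht'.1.le)) (not_le.2 (lt_of_le_of_lt ht.2 (lt_of_le_of_lt h' ht'.1)) |>.elim)
      · exact h'
    have h2' : r.2 ≤ r'.2 := by
      rcases hr.2.2.2 r'.2 hr'.2.1 with h' | h'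
      · exact absurd (ht'.2.trans (h'.trans ht.1.le)) (not_le.2 (lt_of_le_of_lt ht'.2 (lt_of_le_of_lt h' ht.1)) |>.elim)
      · exact h'
    exact hne (Prod.ext he1 (le_antisymm h2' h2))
  have huint : Integrable u := by
    apply integrable_finset_sum
    intro r _
    apply Integrable.const_mul
    rw [integrable_indicator_iff measurableSet_Ioc]
    exact integrableOn_const measure_Ioc_lt_top.ne
  have hgap : ∀ r ∈ G, ∫ t in Set.Ioc r.1 r.2, u t = f r.2 - f r.1 := by
    intro r hr
    have hrr := (hGmem r).1 hr
    rw [hu]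
    rw [integral_finset_sum]
    · rw [Finset.sum_eq_single r]
      · rw [integral_const_mul, setIntegral_indicator measurableSet_Ioc]
        simp only [Set.inter_self]
        rw [setIntegral_const]
        rw [Real.volume_real_Ioc_of_le (by linarith [hrr.2.2.1])]
        rw [smul_eq_mul, mul_one, div_mul_cancel₀ _ (by linarith [hrr.2.2.1] : r.2 - r.1 ≠ 0)]
      · intro r' hr' hne
        rw [integral_const_mul, setIntegral_indicator measurableSet_Ioc]
        rw [hdisj r hr r' hr' hne.symm]
        simp
      · intro h; exact absurd hr h
    · intro r' _
      apply Integrable.integrableOn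
      apply Integrable.const_mul
      rw [integrable_indicator_iff measurableSet_Ioc]
      exact integrableOn_const measure_Ioc_lt_top.ne
  refine ⟨u, huint, ?_⟩
  suffices H : ∀ n : ℕ, ∀ a ∈ S, ∀ b ∈ S, a ≤ b →
      (S.filter (fun c => a < c ∧ c ≤ b)).card ≤ n →
      ∫ t in Set.Ioc a b, u t = f b - f a by
    intro a ha b hb hab
    exact H (S.filter (fun c => a < c ∧ c ≤ b)).card a ha b hb hab le_rfl
  intro n
  induction n with
  | zero =>
    intro a ha b hb hab hcard
    rcases eq_or_lt_of_le hab with h | h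
    · subst h; simp
    · exfalso
      have : b ∈ S.filter (fun c => a < c ∧ c ≤ b) := by
        simp [Finset.mem_filter, hb, h]
      have := Finset.card_pos.2 ⟨b, this⟩
      omega
  | succ n ih =>
    intro a ha b hb hab hcard
    rcases eq_or_lt_of_le hab with h | h
    · subst h; simp
    · set F := S.filter (fun c => a < c ∧ c ≤ b) with hF
      have hne : F.Nonempty := ⟨b, by simp [hF, Finset.mem_filter, hb, h]⟩
      set c := F.min' hne with hc
      have hcF : c ∈ F := F.min'_mem hne
      have hcS : c ∈ S := (Finset.mem_filter.1 hcF).1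
      have hac : a < c := (Finset.mem_filter.1 hcF).2.1
      have hcb : c ≤ b := (Finset.mem_filter.1 hcF).2.2
      have hgapac : (a, c) ∈ G := by
        rw [hGmem]
        refine ⟨ha, hcS, hac, ?_⟩
        intro d hd
        by_contra hcon
        push_neg at hcon
        have hdF : d ∈ F := by
          simp only [hF, Finset.mem_filter]
          exact ⟨hd, hcon.1, hcon.2.le.trans hcb⟩
        exact absurd (F.min'_le d hdF) (not_le.2 hcon.2)
      have hsplit : ∫ t in Set.Ioc a b, u t =
          (∫ t in Set.Ioc a c, u t) + ∫ t in Set.Ioc c b, u t := by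
        rw [← Set.Ioc_union_Ioc_eq_Ioc hac.le hcb]
        rw [setIntegral_union (Set.Ioc_disjoint_Ioc_of_le le_rfl) measurableSet_Ioc
          huint.integrableOn huint.integrableOn]
      rw [hsplit]
      have h1 : ∫ t in Set.Ioc a c, u t = f c - f a := by
        have := hgap (a, c) hgapac
        simpa using this
      have h2 : ∫ t in Set.Ioc c b, u t = f b - f c := by
        apply ih c hcS b hb hcb
        have hsub : S.filter (fun d => c < d ∧ d ≤ b) ⊆ F.erase c := by
          intro d hd
          rw [Finset.mem_filter] at hd
          rw [Finset.mem_erase]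
          constructor
          · exact fun hdc => absurd hd.2.1 (by simp [hdc])
          · simp only [hF, Finset.mem_filter]
            exact ⟨hd.1, hac.trans hd.2.1, hd.2.2⟩
        have := Finset.card_le_card hsub
        have := Finset.card_erase_of_mem hcF
        omega
      rw [h1, h2]; ring

/-- Dehn-type additivity: for "additive" functions `f`, `g`, the sum of
`f(width) * g(height)` over a rectangle partition of `[0,W] × [0,H]` is `f W * g H`. -/
lemma dehn_additivity {k : ℕ} (W H : ℝ) (hW : 0 ≤ W) (hH : 0 ≤ H)
    (f g : ℝ → ℝ) (hf : ∀ x y, f (x - y) = f x - f y) (hg : ∀ x y, g (x - y) = g x - g y)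
    (P : Fin k → Rect) (hP : IsRectPartition W H P) :
    ∑ i, f (P i).width * g (P i).height = f W * g H := by
  classical
  obtain ⟨hnd, hdisj, hcover⟩ := hP
  set S : Finset ℝ := insert 0 (insert W
    ((Finset.univ.image fun i => (P i).x1) ∪ (Finset.univ.image fun i => (P i).x2))) with hS
  set T : Finset ℝ := insert 0 (insert H
    ((Finset.univ.image fun i => (P i).y1) ∪ (Finset.univ.image fun i => (P i).y2))) with hT
  have h0S : (0:ℝ) ∈ S := Finset.mem_insert_self _ _
  have hWS : W ∈ S := Finset.mem_insert_of_mem (Finset.mem_insert_self _ _)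
  have h0T : (0:ℝ) ∈ T := Finset.mem_insert_self _ _
  have hHT : H ∈ T := Finset.mem_insert_of_mem (Finset.mem_insert_self _ _)
  have hx1S : ∀ i, (P i).x1 ∈ S := fun i => by simp [hS]
  have hx2S : ∀ i, (P i).x2 ∈ S := fun i => by simp [hS]
  have hy1T : ∀ i, (P i).y1 ∈ T := fun i => by simp [hT]
  have hy2T : ∀ i, (P i).y2 ∈ T := fun i => by simp [hT]
  obtain ⟨u, hu, hU⟩ := exists_stepFn f S
  obtain ⟨v, hv, hV⟩ := exists_stepFn g T
  have hf0 : f 0 = 0 := by have := hf 0 0; simpa using this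
  have hg0 : g 0 = 0 := by have := hg 0 0; simpa using this
  have hFint : Integrable (fun z : ℝ × ℝ => u z.1 * v z.2) := by
    rw [Measure.volume_eq_prod]
    exact hu.mul_prod hv
  have hrect : ∀ a b c d : ℝ, a ∈ S → b ∈ S → a ≤ b → c ∈ T → d ∈ T → c ≤ d →
      ∫ z in Set.Icc a b ×ˢ Set.Icc c d, u z.1 * v z.2 = (f b - f a) * (g d - g c) := by
    intro a b c d ha hb hab hc hd hcd
    rw [Measure.volume_eq_prod, setIntegral_prod_mul, integral_Icc_eq_integral_Ioc,
      integral_Icc_eq_integral_Ioc, hU a ha b hb hab, hV c hc d hd hcd]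
  have haed : Pairwise (Function.onFun (AEDisjoint volume) fun i => (P i).carrier) := by
    intro i j hij
    have hempty := hdisj i j hij
    rw [Rect.inner, Rect.inner, Set.prod_inter_prod] at hempty
    simp only [Set.Ioo_inter_Ioo] at hempty
    rw [Set.prod_eq_empty_iff] at hempty
    show volume ((P i).carrier ∩ (P j).carrier) = 0
    rw [Rect.carrier, Rect.carrier, Set.prod_inter_prod]
    simp only [Set.Icc_inter_Icc]
    rw [Measure.volume_eq_prod, Measure.prod_prod, Real.volume_Icc, Real.volume_Icc]
    rcases hempty with h | h
    · rw [Set.Ioo_eq_empty_iff, not_lt] at h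
      exact mul_eq_zero_of_left (ENNReal.ofReal_eq_zero.2 (by simp only [sub_nonpos]; exact h)) _
    · rw [Set.Ioo_eq_empty_iff, not_lt] at h
      exact mul_eq_zero_of_right _ (ENNReal.ofReal_eq_zero.2 (by simp only [sub_nonpos]; exact h))
  have hsum : ∫ z in (⋃ i, (P i).carrier), u z.1 * v z.2 =
      ∑' i, ∫ z in (P i).carrier, u z.1 * v z.2 :=
    integral_iUnion_ae
      (fun i => (measurableSet_Icc.prod measurableSet_Icc).nullMeasurableSet)
      haed hFint.integrableOn
  rw [hcover, tsum_fintype] at hsum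
  have hbig : ∫ z in Set.Icc (0:ℝ) W ×ˢ Set.Icc (0:ℝ) H, u z.1 * v z.2 = f W * g H := by
    rw [hrect 0 W 0 H h0S hWS hW h0T hHT hH, hf0, hg0, sub_zero, sub_zero]
  rw [hbig] at hsum
  rw [hsum]
  apply Finset.sum_congr rfl
  intro i _
  rw [Rect.carrier] at *
  rw [hrect _ _ _ _ (hx1S i) (hx2S i) (hnd i).1.le (hy1T i) (hy2T i) (hnd i).2.le]
  rw [Rect.width, Rect.height, hf, hg]

/-- Existence of a `ℚ`-linear functional with prescribed values on a
linearly independent pair. -/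
lemma exists_dual_pair (x y : ℝ) (hli : LinearIndependent ℚ ![x, y]) (c1 c2 : ℝ) :
    ∃ F : ℝ →ₗ[ℚ] ℝ, F x = c1 ∧ F y = c2 := by
  obtain ⟨F, hF⟩ := LinearMap.exists_extend ((Module.Basis.span hli).constr ℚ ![c1, c2])
  refine ⟨F, ?_, ?_⟩
  · have h := congrArg (fun L : _ →ₗ[ℚ] ℝ => L (Module.Basis.span hli 0)) hF
    simp only [LinearMap.comp_apply, Submodule.coe_subtype, Module.Basis.constr_basis] at h
    rw [Module.Basis.span_apply] at h
    simpa using h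
  · have h := congrArg (fun L : _ →ₗ[ℚ] ℝ => L (Module.Basis.span hli 1)) hF
    simp only [LinearMap.comp_apply, Submodule.coe_subtype, Module.Basis.constr_basis] at h
    rw [Module.Basis.span_apply] at h
    simpa using h

/-- If `p/q` is irrational, `SRTP(p,q)` has no solution of any finite size. -/
theorem srtp_no_solution_of_irrational (p q : ℝ) (hp : 0 < p) (hq : 0 < q)
    (hirr : Irrational (p / q)) (k : ℕ) : ¬ StrictPair p q k := by
  rintro ⟨P1, P2, σ, h1, h2, hmatch⟩
  have hq0 : (q:ℝ) ≠ 0 := ne_of_gt hq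
  have hli : LinearIndependent ℚ ![p, q] := by
    rw [LinearIndependent.pair_iff]
    intro s t hst
    have hst' : (s:ℝ) * p + (t:ℝ) * q = 0 := by
      simpa [Rat.smul_def] using hst
    have hs : s = 0 := by
      by_contra hs
      apply hirr
      refine ⟨-t/s, ?_⟩
      have hs' : (s:ℝ) ≠ 0 := by exact_mod_cast hs
      push_cast
      rw [div_eq_div_iff hs' hq0]
      linarith
    subst hs
    refine ⟨rfl, ?_⟩
    have : (t:ℝ) * q = 0 := by push_cast at hst'; linarith
    rcases mul_eq_zero.1 this with h | h
    · exact_mod_cast h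
    · exact absurd h hq0
  obtain ⟨f, hfp, hfq⟩ := exists_dual_pair p q hli 1 0
  obtain ⟨g, hgp, hgq⟩ := exists_dual_pair p q hli 0 1
  have hf : ∀ x y : ℝ, f (x - y) = f x - f y := fun x y => map_sub f x y
  have hg : ∀ x y : ℝ, g (x - y) = g x - g y := fun x y => map_sub g x y
  have e1 : ∑ i, f (P1 i).width * g (P1 i).height = f p * g q :=
    dehn_additivity p q hp.le hq.le (fun x => f x) (fun x => g x) hf hg P1 h1
  have e2 : ∑ i, f (P2 i).width * g (P2 i).height = f q * g p :=
    dehn_additivity q p hq.le hp.le (fun x => f x) (fun x => g x) hf hg P2 h2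
  have e3 : ∑ i, f (P1 i).width * g (P1 i).height
      = ∑ i, f (P2 i).width * g (P2 i).height := by
    rw [← Equiv.sum_comp σ (fun j => f (P2 j).width * g (P2 j).height)]
    exact Finset.sum_congr rfl fun i _ => by rw [(hmatch i).1, (hmatch i).2]
  rw [e1, e2, hfp, hfq, hgp, hgq] at e3
  norm_num at e3
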